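/- Let M be a positive semidefinite real symmetric n×n matrix and i an index such that for every δ > 0, the matrix obtained by decreasing the (i,i) entry of M by δ fails to be positive semidefinite. If f is a Pick function analytic at each node x_j with f(x_j) = w_j, f'(x_j) ≤ v_j for all j, where M is the Pick matrix of the data, then f'(x_i) = v_i. -/

import Mathlib

open Complex Matrix

open Metric Set intervalIntegral MeasureTheory Topology Filter

noncomputable section

lemma im_pos_of_closedBall {t r : ℝ} (hrt : r < t) {ζ : ℂ}
    (hζ : ζ ∈ closedBall ((t:ℝ) * I : ℂ) r) : 0 < ζ.im := by
  have h1 : ‖ζ - (t:ℝ) * I‖ ≤ r := by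
    simpa [Complex.dist_eq] using hζ
  have h2 : |(ζ - (t:ℝ) * I).im| ≤ r := le_trans (Complex.abs_im_le_norm _) h1
  have h3 : (ζ - (t:ℝ)*I).im = ζ.im - t := by simp
  rw [h3] at h2
  have := abs_le.1 h2
  linarith [this.1]

lemma conj_add_center {t : ℝ} (w : ℂ) :
    (starRingEnd ℂ) w + (t:ℝ)*I = (starRingEnd ℂ) (w - (t:ℝ)*I) := by
  simp [_root_.map_sub, Complex.conj_ofReal]

lemma denom_ne_zero {t r : ℝ} (hr : 0 < r) {ζ w : ℂ}
    (hζ : ζ ∈ closedBall ((t:ℝ) * I : ℂ) r) (hw : w ∈ ball ((t:ℝ) * I : ℂ) r) :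
    ((r:ℂ)^2 - (ζ - (t:ℝ)*I) * ((starRingEnd ℂ) w + (t:ℝ)*I)) ≠ 0 := by
  have h1 : ‖ζ - (t:ℝ)*I‖ ≤ r := by simpa [Complex.dist_eq] using hζ
  have h2 : ‖(starRingEnd ℂ) w + (t:ℝ)*I‖ < r := by
    rw [conj_add_center, Complex.norm_conj]
    simpa [Complex.dist_eq] using hw
  intro h
  have h4 : (ζ - (t:ℝ)*I) * ((starRingEnd ℂ) w + (t:ℝ)*I) = (r:ℂ)^2 := by
    linear_combination -h
  have h3 : ‖(ζ - (t:ℝ)*I) * ((starRingEnd ℂ) w + (t:ℝ)*I)‖ < r * r :=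
    calc ‖(ζ - (t:ℝ)*I) * ((starRingEnd ℂ) w + (t:ℝ)*I)‖
        = ‖ζ - (t:ℝ)*I‖ * ‖(starRingEnd ℂ) w + (t:ℝ)*I‖ := norm_mul _ _
      _ ≤ r * ‖(starRingEnd ℂ) w + (t:ℝ)*I‖ :=
          mul_le_mul_of_nonneg_right h1 (norm_nonneg _)
      _ < r * r := mul_lt_mul_of_pos_left h2 hr
  rw [h4] at h3
  simp only [norm_pow, Complex.norm_real, Real.norm_eq_abs, abs_of_pos hr] at h3
  nlinarith

lemma circleMap_im_pos {t r : ℝ} (hr : 0 ≤ r) (hrt : r < t) (θ : ℝ) :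
    0 < (circleMap ((t:ℝ)*I : ℂ) r θ).im :=
  im_pos_of_closedBall hrt (circleMap_mem_closedBall _ hr θ)

lemma diffbleF {t r : ℝ} (hr : 0 < r) (hrt : r < t) (f : ℂ → ℂ)
    (hf : ∀ z : ℂ, 0 < z.im → DifferentiableAt ℂ f z)
    {w ζ : ℂ} (hw : w ∈ ball ((t:ℝ)*I : ℂ) r) (hζ : ζ ∈ closedBall ((t:ℝ)*I : ℂ) r) :
    DifferentiableAt ℂ
      (fun ζ => f ζ * ((r:ℂ)^2 - (ζ - (t:ℝ)*I) * ((starRingEnd ℂ) w + (t:ℝ)*I))⁻¹) ζ := by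
  have him := im_pos_of_closedBall hrt hζ
  have hden := denom_ne_zero hr hζ hw
  exact (hf ζ him).mul
    ((((differentiableAt_const _).sub
      ((differentiableAt_id.sub (differentiableAt_const _)).mul (differentiableAt_const _))).inv hden))

lemma J1 {t r : ℝ} (hr : 0 < r) (hrt : r < t) (f : ℂ → ℂ)
    (hf : ∀ z : ℂ, 0 < z.im → DifferentiableAt ℂ f z)
    {z w : ℂ} (hz : z ∈ ball ((t:ℝ)*I : ℂ) r) (hw : w ∈ ball ((t:ℝ)*I : ℂ) r) :
    ∫ θ in (0:ℝ)..(2*Real.pi), f (circleMap ((t:ℝ)*I) r θ) /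
        ((circleMap ((t:ℝ)*I) r θ - z) *
          ((starRingEnd ℂ) (circleMap ((t:ℝ)*I) r θ) - (starRingEnd ℂ) w))
      = 2*(Real.pi:ℂ) * f z / ((r:ℂ)^2 - (z - (t:ℝ)*I)*((starRingEnd ℂ) w + (t:ℝ)*I)) := by
  set c : ℂ := (t:ℝ)*I with hc
  set g : ℂ → ℂ := fun ζ => ((r:ℂ)^2 - (ζ - c) * ((starRingEnd ℂ) w + c))⁻¹ with hg
  have hF : DiffContOnCl ℂ (fun ζ => f ζ * g ζ) (ball c r) := by
    apply DifferentiableOn.diffContOnCl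
    rw [closure_ball c hr.ne']
    exact fun ζ hζ => (diffbleF hr hrt f hf hw hζ).differentiableWithinAt
  have key := hF.circleIntegral_sub_inv_smul hz
  rw [circleIntegral] at key
  simp only [deriv_circleMap, smul_eq_mul] at key
  have hptwise : ∀ θ ∈ Set.uIcc (0:ℝ) (2*Real.pi),
      circleMap 0 r θ * I * ((circleMap c r θ - z)⁻¹ * (f (circleMap c r θ) * g (circleMap c r θ)))
      = I * (f (circleMap c r θ) /
        ((circleMap c r θ - z) * ((starRingEnd ℂ) (circleMap c r θ) - (starRingEnd ℂ) w))) := by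
    intro θ _
    have ha : circleMap 0 r θ = circleMap c r θ - c := (circleMap_sub_center _ _ _).symm
    have hane : circleMap 0 r θ ≠ 0 := circleMap_ne_center hr.ne'
    have habs : (starRingEnd ℂ) (circleMap 0 r θ) * circleMap 0 r θ = (r:ℂ)^2 := by
      rw [← Complex.normSq_eq_conj_mul_self, ← Complex.sq_norm]
      norm_cast
      simp [norm_circleMap_zero, _root_.sq_abs]
    have hconj : (starRingEnd ℂ) (circleMap c r θ) - (starRingEnd ℂ) w
        = ((r:ℂ)^2 - (circleMap 0 r θ) * ((starRingEnd ℂ) w + c)) / circleMap 0 r θ := by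
      have h5 : (starRingEnd ℂ) (circleMap c r θ) = (starRingEnd ℂ) (circleMap 0 r θ) - c := by
        rw [show circleMap c r θ = circleMap 0 r θ + c by rw [ha]; ring]
        simp only [_root_.map_add, hc, _root_.map_mul, Complex.conj_ofReal, Complex.conj_I]
        ring
      rw [h5, eq_div_iff hane, ← habs]
      ring
    have hzne : circleMap c r θ - z ≠ 0 :=
      sub_ne_zero.2 (circleMap_ne_mem_ball hz θ)
    have hdenne : ((r:ℂ)^2 - (circleMap 0 r θ) * ((starRingEnd ℂ) w + c)) ≠ 0 := by
      have h6 := denom_ne_zero hr (circleMap_mem_closedBall c hr.le θ) hw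
      rwa [← hc, ← ha] at h6
    rw [hconj]
    simp only [hg]
    rw [ha] at hane hdenne ⊢
    field_simp
  rw [intervalIntegral.integral_congr hptwise] at key
  rw [intervalIntegral.integral_const_mul] at key
  have key2 : (∫ θ in (0:ℝ)..(2*Real.pi), f (circleMap c r θ) /
        ((circleMap c r θ - z) *
          ((starRingEnd ℂ) (circleMap c r θ) - (starRingEnd ℂ) w)))
      = 2*(Real.pi:ℂ) * (f z * g z) :=
    mul_left_cancel₀ I_ne_zero (key.trans (by ring))
  rw [key2]
  simp only [hg]
  rw [div_eq_mul_inv]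
  ring

lemma intervalIntegral_conj {f : ℝ → ℂ} {a b : ℝ} :
    ∫ x in a..b, (starRingEnd ℂ) (f x) = (starRingEnd ℂ) (∫ x in a..b, f x) := by
  simp only [intervalIntegral, ← integral_conj, _root_.map_sub]

lemma cont_aux {t r : ℝ} (hr : 0 < r) (hrt : r < t) (f : ℂ → ℂ)
    (hf : ∀ z : ℂ, 0 < z.im → DifferentiableAt ℂ f z) :
    Continuous (fun θ => f (circleMap ((t:ℝ)*I) r θ)) := by
  rw [continuous_iff_continuousAt]
  intro θ
  exact ((hf _ (circleMap_im_pos hr.le hrt θ)).continuousAt).comp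
    (continuous_circleMap _ _).continuousAt

lemma cont_inv_aux {t r : ℝ} (hr : 0 < r) {z w : ℂ}
    (hz : z ∈ ball ((t:ℝ)*I : ℂ) r) (hw : w ∈ ball ((t:ℝ)*I : ℂ) r) :
    Continuous (fun θ => ((circleMap ((t:ℝ)*I) r θ - z) *
      ((starRingEnd ℂ) (circleMap ((t:ℝ)*I) r θ) - (starRingEnd ℂ) w))⁻¹) := by
  apply Continuous.inv₀
  · exact ((continuous_circleMap _ _).sub continuous_const).mul
      ((Complex.continuous_conj.comp (continuous_circleMap _ _)).sub continuous_const)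
  · intro θ
    apply mul_ne_zero
    · exact sub_ne_zero.2 (circleMap_ne_mem_ball hz θ)
    · rw [← _root_.map_sub]
      simp only [ne_eq, map_eq_zero]
      exact sub_ne_zero.2 (circleMap_ne_mem_ball hw θ)

lemma pair_integral {t r : ℝ} (hr : 0 < r) (hrt : r < t) (f : ℂ → ℂ)
    (hf : ∀ z : ℂ, 0 < z.im → DifferentiableAt ℂ f z)
    {z w : ℂ} (hz : z ∈ ball ((t:ℝ)*I : ℂ) r) (hw : w ∈ ball ((t:ℝ)*I : ℂ) r) :
    ∫ θ in (0:ℝ)..(2*Real.pi), (((f (circleMap ((t:ℝ)*I) r θ)).im : ℂ)) /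
        ((circleMap ((t:ℝ)*I) r θ - z) *
          ((starRingEnd ℂ) (circleMap ((t:ℝ)*I) r θ) - (starRingEnd ℂ) w))
      = 2*(Real.pi:ℂ) * (f z - (starRingEnd ℂ) (f w)) /
          (2*I*((r:ℂ)^2 - (z - (t:ℝ)*I)*((starRingEnd ℂ) w + (t:ℝ)*I))) := by
  set c : ℂ := (t:ℝ)*I with hc
  set e : ℝ → ℂ := circleMap c r with he
  have hint1 : IntervalIntegrable (fun θ => f (e θ) / ((e θ - z) *
      ((starRingEnd ℂ) (e θ) - (starRingEnd ℂ) w))) MeasureTheory.volume 0 (2*Real.pi) := by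
    simp only [div_eq_mul_inv]
    exact ((cont_aux hr hrt f hf).mul (cont_inv_aux hr hz hw)).intervalIntegrable _ _
  have hint2 : IntervalIntegrable (fun θ => (starRingEnd ℂ) (f (e θ)) / ((e θ - z) *
      ((starRingEnd ℂ) (e θ) - (starRingEnd ℂ) w))) MeasureTheory.volume 0 (2*Real.pi) := by
    simp only [div_eq_mul_inv]
    exact ((Complex.continuous_conj.comp (cont_aux hr hrt f hf)).mul
      (cont_inv_aux hr hz hw)).intervalIntegrable _ _
  have hsplit : ∀ θ : ℝ, (((f (e θ)).im : ℂ)) /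
        ((e θ - z) * ((starRingEnd ℂ) (e θ) - (starRingEnd ℂ) w))
      = (2*I)⁻¹ * (f (e θ) / ((e θ - z) * ((starRingEnd ℂ) (e θ) - (starRingEnd ℂ) w)))
        - (2*I)⁻¹ * ((starRingEnd ℂ) (f (e θ)) /
            ((e θ - z) * ((starRingEnd ℂ) (e θ) - (starRingEnd ℂ) w))) := by
    intro θ
    have h1 : ((f (e θ)).im : ℂ) = (f (e θ) - (starRingEnd ℂ) (f (e θ))) * (2*I)⁻¹ := by
      rw [Complex.sub_conj]
      have : (2*I : ℂ) ≠ 0 := by simp [I_ne_zero]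
      field_simp
      push_cast
      ring
    rw [h1, div_eq_mul_inv, div_eq_mul_inv, div_eq_mul_inv]
    ring
  rw [intervalIntegral.integral_congr (fun θ _ => hsplit θ)]
  rw [intervalIntegral.integral_sub ((hint1.const_mul _)) ((hint2.const_mul _)),
    intervalIntegral.integral_const_mul, intervalIntegral.integral_const_mul]
  have hJ1 := J1 hr hrt f hf hz hw
  have hJ2 : (∫ θ in (0:ℝ)..(2*Real.pi), (starRingEnd ℂ) (f (e θ)) /
        ((e θ - z) * ((starRingEnd ℂ) (e θ) - (starRingEnd ℂ) w)))
      = (starRingEnd ℂ) (2*(Real.pi:ℂ) * f w /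
          ((r:ℂ)^2 - (w - c)*((starRingEnd ℂ) z + c))) := by
    rw [← J1 hr hrt f hf hw hz, ← _root_.intervalIntegral_conj]
    apply intervalIntegral.integral_congr
    intro θ _
    simp only [map_div₀, _root_.map_mul, _root_.map_sub, Complex.conj_conj]
    ring
  rw [hJ1, hJ2]
  have hD : ((r:ℂ)^2 - (z - c)*((starRingEnd ℂ) w + c)) ≠ 0 :=
    denom_ne_zero hr (ball_subset_closedBall hz) hw
  have hconjD : (starRingEnd ℂ) ((r:ℂ)^2 - (w - c)*((starRingEnd ℂ) z + c))
      = (r:ℂ)^2 - (z - c)*((starRingEnd ℂ) w + c) := by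
    simp only [_root_.map_sub, _root_.map_mul, _root_.map_add, _root_.map_pow, Complex.conj_ofReal, Complex.conj_conj, hc,
      _root_.map_mul, Complex.conj_I]
    ring
  rw [map_div₀, hconjD]
  have h2I : (2*I : ℂ) ≠ 0 := by simp [I_ne_zero]
  simp only [_root_.map_mul, Complex.conj_ofReal, map_ofNat]
  rw [← hc]
  field_simp

lemma quad_nonneg {n : ℕ} {t r : ℝ} (hr : 0 < r) (hrt : r < t) (f : ℂ → ℂ)
    (hf : ∀ z : ℂ, 0 < z.im → DifferentiableAt ℂ f z)
    (him : ∀ z : ℂ, 0 < z.im → 0 ≤ (f z).im)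
    (z : Fin n → ℂ) (hz : ∀ j, z j ∈ ball ((t:ℝ)*I : ℂ) r) (cc : Fin n → ℝ) :
    0 ≤ (∑ j, ∑ k, ((cc j : ℂ) * (cc k : ℂ)) *
        ((f (z j) - (starRingEnd ℂ) (f (z k))) /
          (2*I*((r:ℂ)^2 - (z j - (t:ℝ)*I)*((starRingEnd ℂ) (z k) + (t:ℝ)*I))))).re := by
  set c : ℂ := (t:ℝ)*I with hc
  set e : ℝ → ℂ := circleMap c r with he
  have h2pi : (2*(Real.pi:ℂ)) ≠ 0 := by
    simp [Real.pi_ne_zero]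
  have hterm : ∀ j k, ((f (z j) - (starRingEnd ℂ) (f (z k))) /
        (2*I*((r:ℂ)^2 - (z j - c)*((starRingEnd ℂ) (z k) + c))))
      = (2*(Real.pi:ℂ))⁻¹ * ∫ θ in (0:ℝ)..(2*Real.pi),
          (((f (e θ)).im : ℂ)) / ((e θ - z j) * ((starRingEnd ℂ) (e θ) - (starRingEnd ℂ) (z k))) := by
    intro j k
    rw [pair_integral hr hrt f hf (hz j) (hz k), mul_div_assoc, inv_mul_cancel_left₀ h2pi]
  have hcontq : ∀ j k, Continuous (fun θ => ((cc j : ℂ) * (cc k : ℂ)) *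
      ((((f (e θ)).im : ℂ)) / ((e θ - z j) * ((starRingEnd ℂ) (e θ) - (starRingEnd ℂ) (z k))))) := by
    intro j k
    apply continuous_const.mul
    simp only [div_eq_mul_inv]
    exact (Complex.continuous_ofReal.comp ((Complex.continuous_im.comp
      (cont_aux hr hrt f hf)))).mul (cont_inv_aux hr (hz j) (hz k))
  have hsum : (∑ j, ∑ k, ((cc j : ℂ) * (cc k : ℂ)) *
        ((f (z j) - (starRingEnd ℂ) (f (z k))) /
          (2*I*((r:ℂ)^2 - (z j - c)*((starRingEnd ℂ) (z k) + c)))))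
      = (2*(Real.pi:ℂ))⁻¹ * ∫ θ in (0:ℝ)..(2*Real.pi), ∑ j, ∑ k, ((cc j : ℂ) * (cc k : ℂ)) *
          ((((f (e θ)).im : ℂ)) /
            ((e θ - z j) * ((starRingEnd ℂ) (e θ) - (starRingEnd ℂ) (z k)))) := by
    rw [intervalIntegral.integral_finset_sum]
    swap
    · intro j _
      apply ContinuousOn.intervalIntegrable
      exact (continuous_finset_sum _ (fun k _ => hcontq j k)).continuousOn
    rw [Finset.mul_sum]
    refine Finset.sum_congr rfl (fun j _ => ?_)
    rw [intervalIntegral.integral_finset_sum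
      (fun k _ => (hcontq j k).intervalIntegrable _ _), Finset.mul_sum]
    refine Finset.sum_congr rfl (fun k _ => ?_)
    rw [hterm j k, intervalIntegral.integral_const_mul]
    ring
  rw [hsum]
  have hpt : ∀ θ : ℝ, (∑ j, ∑ k, ((cc j : ℂ) * (cc k : ℂ)) *
        ((((f (e θ)).im : ℂ)) /
          ((e θ - z j) * ((starRingEnd ℂ) (e θ) - (starRingEnd ℂ) (z k)))))
      = (((f (e θ)).im * Complex.normSq (∑ j, (cc j : ℂ) * (e θ - z j)⁻¹) : ℝ) : ℂ) := by
    intro θ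
    have key : ∀ j k, ((cc j : ℂ) * (cc k : ℂ)) *
        ((((f (e θ)).im : ℂ)) /
          ((e θ - z j) * ((starRingEnd ℂ) (e θ) - (starRingEnd ℂ) (z k))))
        = (((f (e θ)).im : ℂ)) * (((cc j : ℂ) * (e θ - z j)⁻¹) *
            (starRingEnd ℂ) ((cc k : ℂ) * (e θ - z k)⁻¹)) := by
      intro j k
      simp only [_root_.map_mul, map_inv₀, _root_.map_sub, Complex.conj_ofReal]
      rw [div_eq_mul_inv, mul_inv]
      ring
    simp only [key]
    simp only [← Finset.mul_sum]
    rw [Complex.ofReal_mul, ← Complex.mul_conj, _root_.map_sum, ← Finset.sum_mul]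
  rw [intervalIntegral.integral_congr (fun θ _ => hpt θ), intervalIntegral.integral_ofReal]
  have hcast : (2*(Real.pi:ℂ))⁻¹ * (((∫ θ in (0:ℝ)..(2*Real.pi),
        (f (e θ)).im * Complex.normSq (∑ j, (cc j : ℂ) * (e θ - z j)⁻¹)) : ℝ) : ℂ)
      = ((((2*Real.pi)⁻¹ * ∫ θ in (0:ℝ)..(2*Real.pi),
        (f (e θ)).im * Complex.normSq (∑ j, (cc j : ℂ) * (e θ - z j)⁻¹)) : ℝ) : ℂ) := by
    push_cast
    ring
  rw [hcast, Complex.ofReal_re]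
  apply mul_nonneg
  · positivity
  · apply intervalIntegral.integral_nonneg
    · positivity
    · intro uu _
      exact mul_nonneg (him _ (circleMap_im_pos hr.le hrt uu)) (Complex.normSq_nonneg _)

lemma halfplane_quad_nonneg {n : ℕ} (f : ℂ → ℂ)
    (hf : ∀ z : ℂ, 0 < z.im → DifferentiableAt ℂ f z)
    (him : ∀ z : ℂ, 0 < z.im → 0 ≤ (f z).im)
    (z : Fin n → ℂ) (hz : ∀ j, 0 < (z j).im) (cc : Fin n → ℝ) :
    0 ≤ (∑ j, ∑ k, ((cc j : ℂ) * (cc k : ℂ)) *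
        ((f (z j) - (starRingEnd ℂ) (f (z k))) / (z j - (starRingEnd ℂ) (z k)))).re := by
  have hzw : ∀ j k : Fin n, z j - (starRingEnd ℂ) (z k) ≠ 0 := by
    intro j k h
    have h2 : (z j - (starRingEnd ℂ) (z k)).im = (z j).im + (z k).im := by
      simp [Complex.sub_im, Complex.conj_im]
    rw [h] at h2
    simp only [Complex.zero_im] at h2
    linarith [hz j, hz k]
  set L : ℂ := ∑ j, ∑ k, ((cc j : ℂ) * (cc k : ℂ)) *
      ((f (z j) - (starRingEnd ℂ) (f (z k))) / (2*(z j - (starRingEnd ℂ) (z k)))) with hL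
  have hball : ∀ j : Fin n, ∀ᶠ t in Filter.atTop,
      z j ∈ ball ((t:ℝ)*I : ℂ) (Real.sqrt (t^2-1)) := by
    intro j
    filter_upwards [Filter.eventually_gt_atTop
      (((z j).re^2 + (z j).im^2 + 1)/(2*(z j).im)), Filter.eventually_gt_atTop (1:ℝ)] with t ht ht1
    have him' := hz j
    have hT : 2*t*(z j).im > (z j).re^2 + (z j).im^2 + 1 := by
      rw [div_lt_iff₀ (by linarith)] at ht
      linarith
    rw [mem_ball, Complex.dist_eq]
    rw [show (Real.sqrt (t^2-1)) = Real.sqrt (t^2-1) from rfl]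
    have hd2 : (‖z j - (t:ℝ)*I‖)^2 = (z j).re^2 + ((z j).im - t)^2 := by
      rw [Complex.sq_norm, Complex.normSq_apply]
      simp
      ring
    rw [show ‖z j - (t:ℝ)*I‖ = Real.sqrt (((z j).re^2 + ((z j).im - t)^2)) by
      rw [← hd2]; rw [Real.sqrt_sq (norm_nonneg _)]]
    apply Real.sqrt_lt_sqrt (by positivity)
    nlinarith
  have hkey : 0 ≤ L.re := by
    set F : ℝ → ℂ := fun t => ∑ j, ∑ k, ((cc j : ℂ) * (cc k : ℂ)) *
        ((f (z j) - (starRingEnd ℂ) (f (z k))) /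
          (2*(z j - (starRingEnd ℂ) (z k)) - 2*I*(1 + z j * (starRingEnd ℂ) (z k)) * ((t:ℝ):ℂ)⁻¹))
      with hF
    have hinv : Filter.Tendsto (fun t : ℝ => ((t:ℂ))⁻¹) Filter.atTop (𝓝 0) := by
      have h1 := (Complex.continuous_ofReal.tendsto (0:ℝ)).comp tendsto_inv_atTop_zero
      simpa [Function.comp_def] using h1
    have hlim : Filter.Tendsto F Filter.atTop (𝓝 L) := by
      rw [hL]
      apply tendsto_finset_sum; intro j _
      apply tendsto_finset_sum; intro k _
      apply Filter.Tendsto.const_mul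
      have hden : Filter.Tendsto (fun t : ℝ =>
          2*(z j - (starRingEnd ℂ) (z k)) - 2*I*(1 + z j * (starRingEnd ℂ) (z k)) * ((t:ℂ))⁻¹)
          Filter.atTop (𝓝 (2*(z j - (starRingEnd ℂ) (z k)))) := by
        have h2 : Filter.Tendsto (fun t : ℝ =>
            2*I*(1 + z j * (starRingEnd ℂ) (z k)) * ((t:ℂ))⁻¹) Filter.atTop (𝓝 0) := by
          simpa using hinv.const_mul (2*I*(1 + z j * (starRingEnd ℂ) (z k)))
        simpa using ((tendsto_const_nhds
          (x := 2*(z j - (starRingEnd ℂ) (z k))) (f := Filter.atTop (α := ℝ))).sub h2)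
      exact Filter.Tendsto.div tendsto_const_nhds hden
        (mul_ne_zero two_ne_zero (hzw j k))
    have hev : ∀ᶠ t in Filter.atTop, 0 ≤ (F t).re := by
      filter_upwards [Filter.eventually_gt_atTop (1:ℝ), Filter.eventually_all.2 hball]
        with t ht1 htb
      have ht2 : (0:ℝ) < t^2 - 1 := by nlinarith
      set r : ℝ := Real.sqrt (t^2-1) with hrdef
      have hr0 : 0 < r := Real.sqrt_pos.2 ht2
      have hrsq : r^2 = t^2 - 1 := Real.sq_sqrt ht2.le
      have hrt : r < t := by nlinarith
      have hq := quad_nonneg hr0 hrt f hf him z htb cc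
      have htne : ((t:ℝ):ℂ) ≠ 0 := Complex.ofReal_ne_zero.2 (by linarith)
      have hr2 : ((r:ℝ):ℂ)^2 = ((t:ℝ):ℂ)^2 - 1 := by
        rw [← Complex.ofReal_pow, hrsq]
        push_cast
        ring
      have hFt : F t = ((t:ℝ):ℂ) * (∑ j, ∑ k, ((cc j : ℂ) * (cc k : ℂ)) *
          ((f (z j) - (starRingEnd ℂ) (f (z k))) /
            (2*I*((r:ℂ)^2 - (z j - (t:ℝ)*I)*((starRingEnd ℂ) (z k) + (t:ℝ)*I))))) := by
        rw [hF, Finset.mul_sum]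
        apply Finset.sum_congr rfl; intro j _
        rw [Finset.mul_sum]
        apply Finset.sum_congr rfl; intro k _
        have hden2 : 2*(z j - (starRingEnd ℂ) (z k)) -
            2*I*(1 + z j * (starRingEnd ℂ) (z k)) * ((t:ℝ):ℂ)⁻¹
            = (2*I*((r:ℂ)^2 - (z j - (t:ℝ)*I)*((starRingEnd ℂ) (z k) + (t:ℝ)*I))) * ((t:ℝ):ℂ)⁻¹ := by
          rw [hr2]
          field_simp
          linear_combination (z j*((t:ℝ):ℂ) - (starRingEnd ℂ) (z k)*((t:ℝ):ℂ)
            - ((t:ℝ):ℂ)^2*I) * Complex.I_sq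
        rw [hden2]
        simp only [div_eq_mul_inv, mul_inv, inv_inv]
        ring
      rw [hFt, Complex.re_ofReal_mul]
      exact mul_nonneg (by linarith) hq
    have hre : Filter.Tendsto (fun t => (F t).re) Filter.atTop (𝓝 L.re) :=
      (Complex.continuous_re.tendsto _).comp hlim
    exact ge_of_tendsto hre hev
  have hfin : (∑ j, ∑ k, ((cc j : ℂ) * (cc k : ℂ)) *
      ((f (z j) - (starRingEnd ℂ) (f (z k))) / (z j - (starRingEnd ℂ) (z k)))) = 2 * L := by
    rw [hL, Finset.mul_sum]
    apply Finset.sum_congr rfl; intro j _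
    rw [Finset.mul_sum]
    apply Finset.sum_congr rfl; intro k _
    rw [div_eq_mul_inv, div_eq_mul_inv, mul_inv]
    have := hzw j k
    field_simp
  rw [hfin]
  simp only [Complex.mul_re]
  norm_num
  linarith [hkey]

lemma pick_matrix_psd {n : ℕ} (x w u : Fin n → ℝ) (hinj : Function.Injective x)
    (f : ℂ → ℂ)
    (hf : ∀ z : ℂ, 0 < z.im → DifferentiableAt ℂ f z ∧ 0 ≤ (f z).im)
    (hA : ∀ j, AnalyticAt ℂ f ((x j : ℝ) : ℂ))
    (hval : ∀ j, f ((x j : ℝ) : ℂ) = ((w j : ℝ) : ℂ))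
    (hder : ∀ j, deriv f ((x j : ℝ) : ℂ) = ((u j : ℝ) : ℂ)) :
    Matrix.PosSemidef (Matrix.of
      (fun j k => if j = k then u j else (w j - w k)/(x j - x k))) := by
  rw [Matrix.posSemidef_iff_dotProduct_mulVec]
  constructor
  · ext j k
    simp only [Matrix.conjTranspose_apply, Matrix.of_apply, star_trivial]
    by_cases h : j = k
    · subst h; simp
    · simp only [if_neg h, if_neg (Ne.symm h)]
      rw [show w k - w j = -(w j - w k) by ring, show x k - x j = -(x j - x k) by ring,
        neg_div_neg_eq]
  · intro cc
    set Qr : ℝ := ∑ j, ∑ k, cc j * cc k *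
        (if j = k then u j else (w j - w k)/(x j - x k)) with hQr
    have hgoal : dotProduct (star cc) ((Matrix.of
        (fun j k => if j = k then u j else (w j - w k)/(x j - x k))).mulVec cc) = Qr := by
      simp only [dotProduct, Matrix.mulVec, dotProduct, Matrix.of_apply,
        star_trivial, Finset.mul_sum, hQr]
      refine Finset.sum_congr rfl (fun j _ => Finset.sum_congr rfl (fun k _ => by ring))
    rw [hgoal]
    -- the approximating sums
    set S : ℝ → ℂ := fun ε => ∑ j, ∑ k, ((cc j : ℂ) * (cc k : ℂ)) *
        ((f ((x j : ℂ) + ε*I) - (starRingEnd ℂ) (f ((x k : ℂ) + ε*I))) /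
          (((x j : ℂ) + ε*I) - (starRingEnd ℂ) ((x k : ℂ) + ε*I))) with hS
    have hpos : ∀ ε : ℝ, 0 < ε → 0 ≤ (S ε).re := by
      intro ε hε
      exact halfplane_quad_nonneg f (fun z hz => (hf z hz).1) (fun z hz => (hf z hz).2)
        (fun j => (x j : ℂ) + ε*I) (fun j => by simp [hε]) cc
    have hlim : Filter.Tendsto S (𝓝[>] (0:ℝ)) (𝓝 ((Qr : ℝ) : ℂ)) := by
      have hQ' : ((Qr : ℝ) : ℂ) = ∑ j, ∑ k, ((cc j : ℂ) * (cc k : ℂ)) *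
          (((if j = k then u j else (w j - w k)/(x j - x k)) : ℝ) : ℂ) := by
        rw [hQr]
        push_cast
        rfl
      rw [hQ', hS]
      apply tendsto_finset_sum; intro j _
      apply tendsto_finset_sum; intro k _
      apply Filter.Tendsto.const_mul
      by_cases hjk : j = k
      · subst hjk
        simp only [if_pos rfl]
        -- diagonal term
        have hd : HasDerivAt f ((u j : ℝ) : ℂ) ((x j : ℝ) : ℂ) := by
          have := (hA j).differentiableAt.hasDerivAt
          rwa [hder j] at this
        have hφ : Filter.Tendsto (fun ε : ℝ => (x j : ℂ) + ε*I) (𝓝[>] (0:ℝ))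
            (𝓝[≠] ((x j : ℝ) : ℂ)) := by
          rw [tendsto_nhdsWithin_iff]
          constructor
          · have : Filter.Tendsto (fun ε : ℝ => (x j : ℂ) + ε*I) (𝓝 (0:ℝ))
                (𝓝 ((x j : ℂ) + (0:ℝ)*I)) := by
              apply Filter.Tendsto.const_add
              exact (Complex.continuous_ofReal.tendsto _).mul tendsto_const_nhds
            simp only [Complex.ofReal_zero, zero_mul, add_zero] at this
            exact this.mono_left nhdsWithin_le_nhds
          · filter_upwards [self_mem_nhdsWithin] with ε (hε : 0 < ε)
            simp only [Set.mem_compl_iff, Set.mem_singleton_iff]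
            intro h
            have : (ε:ℂ)*I = 0 := by linear_combination h
            simp [Complex.ext_iff, I_ne_zero] at this
            linarith
        have hg : Filter.Tendsto (fun ε : ℝ => ((x j : ℂ) + ε*I - (x j : ℂ))⁻¹ *
            (f ((x j : ℂ) + ε*I) - f ((x j : ℝ) : ℂ))) (𝓝[>] (0:ℝ)) (𝓝 ((u j : ℝ) : ℂ)) := by
          have hslope := (hasDerivAt_iff_tendsto_slope.1 hd).comp hφ
          apply hslope.congr
          intro ε
          simp [slope_def_field, div_eq_inv_mul]
        have hre : Filter.Tendsto (fun ε : ℝ => (((x j : ℂ) + ε*I - (x j : ℂ))⁻¹ *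
            (f ((x j : ℂ) + ε*I) - f ((x j : ℝ) : ℂ))).re) (𝓝[>] (0:ℝ)) (𝓝 (u j)) := by
          have h5 := (Complex.continuous_re.tendsto _).comp hg
          rw [Complex.ofReal_re] at h5
          exact h5
        have := (Complex.continuous_ofReal.tendsto _).comp hre
        apply Filter.Tendsto.congr' _ this
        filter_upwards [self_mem_nhdsWithin] with ε (hε : 0 < ε)
        have hεne : (ε : ℂ) ≠ 0 := Complex.ofReal_ne_zero.2 hε.ne'
        simp only [Function.comp_def]
        -- show ofReal (re (g ε)) = (f z - conj (f z)) / (z - conj z)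
        set z : ℂ := (x j : ℂ) + ε*I with hz
        have hzc : z - (starRingEnd ℂ) z = 2*ε*I := by
          rw [hz]
          apply Complex.ext <;> simp <;> ring
        have hA2 : f z - (starRingEnd ℂ) (f z)
            = (f z - f (x j : ℂ)) - (starRingEnd ℂ) (f z - f (x j : ℂ)) := by
          rw [_root_.map_sub, hval j, Complex.conj_ofReal]
          ring
        have hsubconj := Complex.sub_conj (f z - f ((x j : ℝ) : ℂ))
        have hginv : ((x j : ℂ) + ε*I - (x j : ℂ))⁻¹ *
            (f ((x j : ℂ) + ε*I) - f ((x j : ℝ) : ℂ))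
            = (f z - f ((x j:ℝ):ℂ)) * (ε:ℂ)⁻¹ * (-I) := by
          rw [show (x j : ℂ) + ε*I - (x j : ℂ) = ε*I by ring, mul_inv, ← hz]
          rw [Complex.inv_I]
          ring
        rw [hginv]
        have hre2 : ((f z - f ((x j:ℝ):ℂ)) * (ε:ℂ)⁻¹ * (-I)).re
            = (f z - f ((x j:ℝ):ℂ)).im * ε⁻¹ := by
          rw [show (f z - f ((x j:ℝ):ℂ)) * (ε:ℂ)⁻¹ * (-I)
            = ((ε⁻¹ : ℝ) : ℂ) * ((f z - f ((x j:ℝ):ℂ)) * (-I)) by push_cast; ring]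
          rw [Complex.re_ofReal_mul]
          simp [Complex.mul_re]
          ring
        rw [hre2, hzc, hA2, hsubconj]
        push_cast
        field_simp
      · -- off-diagonal
        simp only [if_neg hjk]
        have hxne : x j - x k ≠ 0 := sub_ne_zero.2 (fun h => hjk (hinj h))
        have hφ : ∀ m : Fin n, Filter.Tendsto (fun ε : ℝ => (x m : ℂ) + ε*I) (𝓝[>] (0:ℝ))
            (𝓝 ((x m : ℝ) : ℂ)) := by
          intro m
          have : Filter.Tendsto (fun ε : ℝ => (x m : ℂ) + ε*I) (𝓝 (0:ℝ))
              (𝓝 ((x m : ℂ) + (0:ℝ)*I)) :=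
            Filter.Tendsto.const_add _ ((Complex.continuous_ofReal.tendsto _).mul tendsto_const_nhds)
          simp only [Complex.ofReal_zero, zero_mul, add_zero] at this
          exact this.mono_left nhdsWithin_le_nhds
        have hnum : Filter.Tendsto (fun ε : ℝ =>
            f ((x j : ℂ) + ε*I) - (starRingEnd ℂ) (f ((x k : ℂ) + ε*I))) (𝓝[>] (0:ℝ))
            (𝓝 (((w j : ℝ) : ℂ) - (starRingEnd ℂ) ((w k : ℝ) : ℂ)))  := by
          have h1 : Filter.Tendsto (fun ε : ℝ => f ((x j : ℂ) + ε*I)) (𝓝[>] (0:ℝ))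
              (𝓝 (((w j : ℝ):ℂ))) := by
            rw [← hval j]
            exact ((hA j).continuousAt.tendsto).comp (hφ j)
          have h2 : Filter.Tendsto (fun ε : ℝ => (starRingEnd ℂ) (f ((x k : ℂ) + ε*I)))
              (𝓝[>] (0:ℝ)) (𝓝 ((starRingEnd ℂ) ((w k : ℝ):ℂ))) := by
            have h3 : Filter.Tendsto (fun ε : ℝ => f ((x k : ℂ) + ε*I)) (𝓝[>] (0:ℝ))
                (𝓝 (((w k : ℝ):ℂ))) := by
              rw [← hval k]
              exact ((hA k).continuousAt.tendsto).comp (hφ k)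
            exact (Complex.continuous_conj.tendsto _).comp h3
          exact h1.sub h2
        have hden : Filter.Tendsto (fun ε : ℝ =>
            ((x j : ℂ) + ε*I) - (starRingEnd ℂ) ((x k : ℂ) + ε*I)) (𝓝[>] (0:ℝ))
            (𝓝 (((x j : ℝ) : ℂ) - ((x k : ℝ) : ℂ))) := by
          have h2 : Filter.Tendsto (fun ε : ℝ => (starRingEnd ℂ) ((x k : ℂ) + ε*I))
              (𝓝[>] (0:ℝ)) (𝓝 ((starRingEnd ℂ) ((x k : ℝ):ℂ))) :=
            (Complex.continuous_conj.tendsto _).comp (hφ k)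
          have := (hφ j).sub h2
          simpa [Complex.conj_ofReal] using this
        have hdenne : ((x j : ℝ) : ℂ) - ((x k : ℝ) : ℂ) ≠ 0 := by
          rw [← Complex.ofReal_sub]
          exact Complex.ofReal_ne_zero.2 hxne
        have hval2 : (((w j:ℝ):ℂ) - (starRingEnd ℂ) ((w k:ℝ):ℂ)) /
            (((x j:ℝ):ℂ) - ((x k:ℝ):ℂ)) = (((w j - w k)/(x j - x k) : ℝ) : ℂ) := by
          rw [Complex.conj_ofReal]
          push_cast
          ring
        rw [← hval2]
        exact hnum.div hden hdenne
    have hrelim : Filter.Tendsto (fun ε => (S ε).re) (𝓝[>] (0:ℝ)) (𝓝 Qr) := by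
      have := (Complex.continuous_re.tendsto _).comp hlim
      simpa [Function.comp_def] using this
    exact ge_of_tendsto hrelim (by
      filter_upwards [self_mem_nhdsWithin] with ε (hε : 0 < ε)
      exact hpos ε hε)

/-- if the Pick matrix `M` of the data is positive semidefinite
but decreasing its `(i,i)` entry by any `δ > 0` destroys positive
semidefiniteness, then every Pick-function solution of the relaxed problem
attains the derivative bound at the node `i`: `f'(x_i) = v_i`. -/
theorem derivative_attained_at_minimal_index {n : ℕ}
    (x w v : Fin n → ℝ) (hinj : Function.Injective x)
    (M : Matrix (Fin n) (Fin n) ℝ)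
    (hM : ∀ j k, M j k = if j = k then v j else (w j - w k) / (x j - x k))
    (hpsd : M.PosSemidef)
    (i : Fin n)
    (hmin : ∀ δ : ℝ, 0 < δ → ¬ (M - Matrix.single i i δ).PosSemidef)
    (f : ℂ → ℂ)
    (hf : ∀ z : ℂ, 0 < z.im → DifferentiableAt ℂ f z ∧ 0 ≤ (f z).im)
    (hA : ∀ j, AnalyticAt ℂ f ((x j : ℝ) : ℂ))
    (hreal : ∀ j, ∀ᶠ t : ℝ in nhds (x j), (f (t : ℂ)).im = 0)
    (hval : ∀ j, f ((x j : ℝ) : ℂ) = ((w j : ℝ) : ℂ))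
    (u : Fin n → ℝ)
    (hder : ∀ j, deriv f ((x j : ℝ) : ℂ) = ((u j : ℝ) : ℂ))
    (hle : ∀ j, u j ≤ v j) :
    u i = v i := by
  by_contra hne
  have hlt : u i < v i := lt_of_le_of_ne (hle i) hne
  have hδpos : 0 < v i - u i := by linarith
  apply hmin (v i - u i) hδpos
  have hB := pick_matrix_psd x w u hinj f hf hA hval hder
  have hD : Matrix.PosSemidef
      (Matrix.diagonal (fun j : Fin n => if j = i then 0 else v j - u j)) := by
    apply Matrix.posSemidef_diagonal_iff.2
    intro j
    by_cases h : j = i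
    · simp [h]
    · simp only [if_neg h]
      linarith [hle j]
  have hsum := hB.add hD
  convert hsum using 1
  ext j k
  simp only [Matrix.sub_apply, Matrix.add_apply, Matrix.of_apply, Matrix.diagonal_apply]
  rw [hM j k]
  by_cases hjk : j = k
  · subst hjk
    by_cases hji : j = i
    · subst hji
      simp
    · rw [show Matrix.single i i (v i - u i) j j = 0 from
        Matrix.single_apply_of_ne i i _ j j (fun h => hji h.1.symm)]
      simp [hji]
  · rw [show Matrix.single i i (v i - u i) j k = 0 from
      Matrix.single_apply_of_ne i i _ j k (fun h => hjk (h.1.symm.trans h.2))]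
    simp [hjk]
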